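/- Let X be a real normed linear space. Then DW_B(X) = sup{ (1+t)‖u+v‖ / ‖u+tv‖ : u, v ∈ S_X, u ⊥_B v, t > 0 }. -/
import Mathlib


/-- `DW_B(X) = sup { (1+t)‖u+v‖ / ‖u+tv‖ : u, v ∈ S_X, u ⊥_B v, t > 0 }`,
where `x ⊥_B y` means `‖x + λy‖ ≥ ‖x‖` for all real `λ`. -/
theorem dunkl_williams_birkhoff_eq_DWB5 {X : Type*} [NormedAddCommGroup X]
    [NormedSpace ℝ X] :
    sSup {c : ℝ | ∃ x y : X, x ≠ 0 ∧ y ≠ 0 ∧ (∀ l : ℝ, ‖x‖ ≤ ‖x + l • y‖) ∧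
      c = (‖x‖ + ‖y‖) / ‖x - y‖ * ‖‖x‖⁻¹ • x - ‖y‖⁻¹ • y‖} =
    sSup {c : ℝ | ∃ u v : X, ∃ t : ℝ, ‖u‖ = 1 ∧ ‖v‖ = 1 ∧
      (∀ l : ℝ, ‖u‖ ≤ ‖u + l • v‖) ∧ 0 < t ∧
      c = (1 + t) * ‖u + v‖ / ‖u + t • v‖} := by
  congr 1
  ext c
  constructor
  · rintro ⟨x, y, hx, hy, horth, rfl⟩
    have hxn : (0:ℝ) < ‖x‖ := norm_pos_iff.mpr hx
    have hyn : (0:ℝ) < ‖y‖ := norm_pos_iff.mpr hy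
    have hxy : x ≠ y := by
      intro h
      have := horth (-1)
      rw [h, neg_one_smul, add_neg_cancel, norm_zero] at this
      exact absurd this (by rw [← h]; linarith)
    have hsub : (0:ℝ) < ‖x - y‖ := by
      rw [norm_pos_iff, sub_ne_zero]; exact hxy
    refine ⟨‖x‖⁻¹ • x, -(‖y‖⁻¹ • y), ‖y‖ / ‖x‖, ?_, ?_, ?_, ?_, ?_⟩
    · rw [norm_smul, norm_inv, norm_norm, inv_mul_cancel₀ hxn.ne']
    · rw [norm_neg, norm_smul, norm_inv, norm_norm, inv_mul_cancel₀ hyn.ne']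
    · intro l
      have key : ‖x‖⁻¹ • x + l • -(‖y‖⁻¹ • y)
          = ‖x‖⁻¹ • (x + (-(l * ‖x‖ / ‖y‖)) • y) := by
        match_scalars <;> field_simp <;> ring
      rw [key, norm_smul, norm_smul, norm_inv, norm_norm,
        inv_mul_cancel₀ hxn.ne']
      calc (1:ℝ) = ‖x‖⁻¹ * ‖x‖ := (inv_mul_cancel₀ hxn.ne').symm
        _ ≤ ‖x‖⁻¹ * ‖x + (-(l * ‖x‖ / ‖y‖)) • y‖ := by
            apply mul_le_mul_of_nonneg_left (horth _) (by positivity)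
    · positivity
    · have h1 : ‖x‖⁻¹ • x + -(‖y‖⁻¹ • y) = ‖x‖⁻¹ • x - ‖y‖⁻¹ • y := by abel
      have h2 : ‖x‖⁻¹ • x + (‖y‖ / ‖x‖) • -(‖y‖⁻¹ • y) = ‖x‖⁻¹ • (x - y) := by
        match_scalars <;> field_simp <;> ring
      rw [h1, h2, norm_smul, norm_inv, norm_norm]
      rw [div_mul_eq_mul_div, div_eq_div_iff hsub.ne' (by positivity)]
      field_simp
  · rintro ⟨u, v, t, hu, hv, horth, ht, rfl⟩
    have hun : u ≠ 0 := by intro h; rw [h, norm_zero] at hu; norm_num at hu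
    have hvn : v ≠ 0 := by intro h; rw [h, norm_zero] at hv; norm_num at hv
    refine ⟨u, (-t) • v, hun, smul_ne_zero (by linarith [ht.ne']) hvn, ?_, ?_⟩
    · intro l
      have : u + l • (-t) • v = u + (l * (-t)) • v := by rw [smul_smul]
      rw [this]; exact horth _
    · have hyn : ‖(-t) • v‖ = t := by
        rw [norm_smul, hv, Real.norm_eq_abs, abs_neg, abs_of_pos ht, mul_one]
      rw [hu, hyn]
      have h1 : u - (-t) • v = u + t • v := by module
      have h2 : (1:ℝ)⁻¹ • u - t⁻¹ • (-t) • v = u + v := by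
        rw [inv_one, one_smul, smul_smul, mul_neg, inv_mul_cancel₀ ht.ne',
          neg_one_smul, sub_neg_eq_add]
      rw [h1, h2]
      ring
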